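/- arXiv:1708.05855 — 2 statements merged into one kernel-verified Lean document; each statement's English description precedes it below -/
import Mathlib

section
/- Let z be a point of the open unit disk and let θ, θ′ ∈ ℝ with 0 < θ′ − θ < 2π. Let α ∈ (0, 2π) and ρ > 0 be the unique numbers such that e^{iθ′} − z = ρ·e^{iα}·(e^{iθ} − z). Then ∫_θ^{θ′} P(z,t) dt = (2α − (θ′ − θ))/(2π). -/
/-- The Poisson kernel of the unit disk:
`P(z,θ) = (1/(2π)) · (1 − |z|²)/|z − e^{iθ}|²`. -/
noncomputable def poisson (z : ℂ) (θ : ℝ) : ℝ :=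
  (1 / (2 * Real.pi)) * (1 - ‖z‖ ^ 2) /
    ‖z - Complex.exp (θ * Complex.I)‖ ^ 2


section HMAux
open Complex Real

noncomputable def wf (z : ℂ) (t : ℝ) : ℂ := 1 - z * Complex.exp (-(t * Complex.I))

lemma wf_hasDerivAt (z : ℂ) (t : ℝ) :
    HasDerivAt (wf z) (z * Complex.exp (-(t * Complex.I)) * Complex.I) t := by
  have h1 : HasDerivAt (fun s : ℝ => -((s : ℂ) * Complex.I)) (-Complex.I) t := by
    have h := ((Complex.ofRealCLM.hasDerivAt (x := t)).mul_const Complex.I).neg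
    simp only [Complex.ofRealCLM_apply, Complex.ofReal_one, one_mul] at h
    exact h
  have h2 := (h1.cexp.const_mul z).const_sub 1
  refine h2.congr_deriv ?_
  symm
  ring

lemma u_re_le (z : ℂ) (t : ℝ) : (z * Complex.exp (-(t * Complex.I))).re ≤ ‖z‖ := by
  calc (z * Complex.exp (-(t * Complex.I))).re
      ≤ ‖z * Complex.exp (-(t * Complex.I))‖ := Complex.re_le_norm _
    _ = ‖z‖ := by
        rw [norm_mul]
        simp [Complex.norm_exp]

lemma wf_re_pos (z : ℂ) (hz : ‖z‖ < 1) (t : ℝ) : 0 < (wf z t).re := by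
  have h := u_re_le z t
  simp only [wf, Complex.sub_re, Complex.one_re]
  linarith

lemma normSq_u (z : ℂ) (t : ℝ) :
    Complex.normSq (z * Complex.exp (-(t * Complex.I))) = Complex.normSq z := by
  rw [Complex.normSq_mul]
  simp [Complex.normSq_eq_norm_sq, Complex.norm_exp]

lemma normSq_wf (z : ℂ) (t : ℝ) :
    Complex.normSq (wf z t) =
      1 - 2 * (z * Complex.exp (-(t * Complex.I))).re + Complex.normSq z := by
  have habs := normSq_u z t
  simp only [Complex.normSq_apply] at habs ⊢
  simp only [wf, Complex.sub_re, Complex.sub_im, Complex.one_re, Complex.one_im]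
  linear_combination habs

lemma normSq_wf_pos (z : ℂ) (hz : ‖z‖ < 1) (t : ℝ) : 0 < Complex.normSq (wf z t) := by
  have := wf_re_pos z hz t
  apply Complex.normSq_pos.2
  intro h
  rw [h] at this
  simp at this

lemma g_hasDerivAt (z : ℂ) (hz : ‖z‖ < 1) (t : ℝ) :
    HasDerivAt (fun s => (Complex.log (wf z s)).im)
      (((z * Complex.exp (-(t * Complex.I))).re - Complex.normSq z)
        / Complex.normSq (wf z t)) t := by
  have hmem : wf z t ∈ Complex.slitPlane := Or.inl (wf_re_pos z hz t)
  have hlog : HasDerivAt (fun s => Complex.log (wf z s))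
      (z * Complex.exp (-(t * Complex.I)) * Complex.I / wf z t) t := by
    have h := ((Complex.hasDerivAt_log hmem).hasFDerivAt.restrictScalars ℝ).comp_hasDerivAt
      t (wf_hasDerivAt z t)
    simp [div_eq_mul_inv, mul_comm] at h ⊢
    exact h
  have him := Complex.imCLM.hasFDerivAt.comp_hasDerivAt t hlog
  refine him.congr_deriv ?_
  symm
  set u := z * Complex.exp (-(t * Complex.I)) with hu
  have hre : (wf z t).re = 1 - u.re := by simp [wf, ← hu]
  have him' : (wf z t).im = -u.im := by simp [wf, ← hu]
  have habs := normSq_u z t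
  rw [← hu] at habs
  simp only [Complex.normSq_apply] at habs
  simp only [ContinuousLinearMap.coe_coe, Complex.imCLM_apply, Complex.div_im, Complex.mul_re,
    Complex.mul_im, Complex.I_re, Complex.I_im, hre, him']
  rw [show u.re - Complex.normSq z = u.re - (z.re * z.re + z.im * z.im) by
    rw [Complex.normSq_apply], ← habs]
  ring

lemma poisson_eq (z : ℂ) (t : ℝ) :
    poisson z t = (1 - Complex.normSq z) / (2 * Real.pi * Complex.normSq (wf z t)) := by
  have he : Complex.exp (t * Complex.I) * Complex.exp (-(t * Complex.I)) = 1 := by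
    rw [← Complex.exp_add]
    ring_nf
    exact Complex.exp_zero
  have hzw : z - Complex.exp (t * Complex.I) = -(Complex.exp (t * Complex.I) * wf z t) := by
    simp only [wf, mul_sub, mul_one]
    linear_combination (-z) * he
  have habs1 : ‖Complex.exp (t * Complex.I)‖ = 1 := by
    simp [Complex.norm_exp]
  rw [poisson, hzw, norm_neg, norm_mul, habs1, one_mul, Complex.sq_norm z, Complex.sq_norm]
  ring

end HMAux

/-- **Harmonic measure via the inscribed angle.**  Let `z` be in the open unit disk,
`θ, θ′ ∈ ℝ` with `0 < θ′ − θ < 2π`, and let `α ∈ (0,2π)`, `ρ > 0` be such that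
`e^{iθ′} − z = ρ·e^{iα}·(e^{iθ} − z)` (so `α` is the counterclockwise angle at `z`
between the rays toward `e^{iθ}` and `e^{iθ′}`).  Then
`∫_θ^{θ′} P(z,t) dt = (2α − (θ′ − θ))/(2π)`. -/
theorem harmonic_measure_angle
    (z : ℂ) (hz : ‖z‖ < 1) (θ θ' : ℝ)
    (hθ : 0 < θ' - θ) (hθ2 : θ' - θ < 2 * Real.pi)
    (α ρ : ℝ) (hα : α ∈ Set.Ioo 0 (2 * Real.pi)) (hρ : 0 < ρ)
    (hrel : Complex.exp (θ' * Complex.I) - z =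
      (ρ : ℂ) * Complex.exp (α * Complex.I) * (Complex.exp (θ * Complex.I) - z)) :
    ∫ t in θ..θ', poisson z t = (2 * α - (θ' - θ)) / (2 * Real.pi) := by
  obtain ⟨hα1, hα2⟩ := hα
  have hπ := Real.pi_pos
  set g : ℝ → ℝ := fun t => (Complex.log (wf z t)).im with hgdef
  have hznorm : Complex.normSq z < 1 := by
    rw [← Complex.sq_norm]
    nlinarith [norm_nonneg z]
  -- F and its derivative
  have hF : ∀ t : ℝ, HasDerivAt (fun s => (s + 2 * g s) / (2 * Real.pi)) (poisson z t) t := by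
    intro t
    have h := ((hasDerivAt_id t).add ((g_hasDerivAt z hz t).const_mul 2)).div_const (2 * Real.pi)
    refine h.congr_deriv ?_
    symm
    rw [poisson_eq]
    have hN := normSq_wf z t
    have hNpos := normSq_wf_pos z hz t
    set r := (z * Complex.exp (-(↑t * Complex.I))).re with hr
    set N := Complex.normSq (wf z t) with hNdef
    set nz := Complex.normSq z with hnz
    field_simp
    linear_combination (-1) * hN
  -- continuity / integrability
  have hcexp : Continuous fun t : ℝ => Complex.exp (↑t * Complex.I) :=
    Complex.continuous_exp.comp (Complex.continuous_ofReal.mul continuous_const)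
  have hne : ∀ t : ℝ, ‖z - Complex.exp (↑t * Complex.I)‖ ^ 2 ≠ 0 := by
    intro t
    apply pow_ne_zero
    rw [ne_eq, norm_eq_zero, sub_eq_zero]
    intro h
    rw [h] at hz
    simp [Complex.norm_exp] at hz
  have hcont : Continuous (poisson z) := by
    unfold poisson
    exact continuous_const.div
      ((continuous_norm.comp (continuous_const.sub hcexp)).pow 2) hne
  have hint : ∫ t in θ..θ', poisson z t
      = (θ' + 2 * g θ') / (2 * Real.pi) - (θ + 2 * g θ) / (2 * Real.pi) :=
    intervalIntegral.integral_eq_sub_of_hasDerivAt (fun t _ => hF t)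
      (hcont.intervalIntegrable θ θ')
  -- A = id + g is strictly monotone
  have hA : ∀ t : ℝ, HasDerivAt (fun s => s + g s)
      (1 + ((z * Complex.exp (-(↑t * Complex.I))).re - Complex.normSq z)
        / Complex.normSq (wf z t)) t :=
    fun t => (hasDerivAt_id t).add (g_hasDerivAt z hz t)
  have hApos : ∀ t : ℝ, 0 < 1 + ((z * Complex.exp (-(↑t * Complex.I))).re - Complex.normSq z)
      / Complex.normSq (wf z t) := by
    intro t
    have hN := normSq_wf z t
    have hNpos := normSq_wf_pos z hz t
    have hu := u_re_le z t
    rw [show (1 : ℝ) + ((z * Complex.exp (-(↑t * Complex.I))).re - Complex.normSq z)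
        / Complex.normSq (wf z t)
      = (1 - (z * Complex.exp (-(↑t * Complex.I))).re) / Complex.normSq (wf z t) by
        set r := (z * Complex.exp (-(↑t * Complex.I))).re with hrd
        set N := Complex.normSq (wf z t) with hNdef
        set nz := Complex.normSq z with hnz
        field_simp
        linear_combination hN]
    apply div_pos _ hNpos
    linarith
  have hmono : StrictMono (fun s : ℝ => s + g s) :=
    strictMono_of_deriv_pos (fun t => by rw [(hA t).deriv]; exact hApos t)
  -- periodicity
  have hper : g (θ + 2 * Real.pi) = g θ := by
    have hwp : wf z (θ + 2 * Real.pi) = wf z θ := by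
      unfold wf
      congr 2
      rw [show -((↑(θ + 2 * Real.pi) : ℂ) * Complex.I)
          = -(↑θ * Complex.I) + -(2 * ↑Real.pi * Complex.I) by push_cast; ring,
        Complex.exp_add]
      have h2pi : Complex.exp (-(2 * ↑Real.pi * Complex.I)) = 1 := by
        rw [Complex.exp_neg, Complex.exp_two_pi_mul_I, inv_one]
      rw [h2pi, mul_one]
    show (Complex.log (wf z (θ + 2 * Real.pi))).im = (Complex.log (wf z θ)).im
    rw [hwp]
  have h1 : θ + g θ < θ' + g θ' := hmono (by linarith : θ < θ')
  have h2 : θ' + g θ' < (θ + 2 * Real.pi) + g (θ + 2 * Real.pi) := hmono (by linarith)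
  rw [hper] at h2
  -- relate to α via hrel
  have hwne : ∀ t : ℝ, wf z t ≠ 0 := by
    intro t h
    have := wf_re_pos z hz t
    rw [h] at this
    simp at this
  have hwabs : ∀ t : ℝ, 0 < ‖wf z t‖ := fun t => norm_pos_iff.mpr (hwne t)
  have hsplit : ∀ t : ℝ, Complex.exp (↑t * Complex.I) - z
      = Complex.exp (↑t * Complex.I)
        * (((‖wf z t‖ : ℝ) : ℂ) * Complex.exp ((g t : ℝ) * Complex.I)) := by
    intro t
    have harg : (g t : ℝ) = Complex.arg (wf z t) := Complex.log_im _
    rw [harg, Complex.norm_mul_exp_arg_mul_I]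
    have he : Complex.exp (↑t * Complex.I) * Complex.exp (-(↑t * Complex.I)) = 1 := by
      rw [← Complex.exp_add]; ring_nf; exact Complex.exp_zero
    simp only [wf, mul_sub, mul_one]
    linear_combination z * he
  rw [hsplit θ', hsplit θ] at hrel
  have hkey : ((‖wf z θ'‖ : ℝ) : ℂ) * Complex.exp ((θ' + g θ' : ℝ) * Complex.I)
      = ((ρ * ‖wf z θ‖ : ℝ) : ℂ)
        * Complex.exp ((α + (θ + g θ) : ℝ) * Complex.I) := by
    push_cast
    rw [show ((θ' : ℂ) + ↑(g θ')) * Complex.I = ↑θ' * Complex.I + ↑(g θ') * Complex.I by ring,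
      show ((α : ℂ) + (↑θ + ↑(g θ))) * Complex.I
        = ↑α * Complex.I + (↑θ * Complex.I + ↑(g θ) * Complex.I) by ring,
      Complex.exp_add, Complex.exp_add, Complex.exp_add]
    linear_combination hrel
  have hexp : Complex.exp ((θ' + g θ' : ℝ) * Complex.I)
      = Complex.exp ((α + (θ + g θ) : ℝ) * Complex.I) := by
    have habs2 : ‖wf z θ'‖ = ρ * ‖wf z θ‖ := by
      have h := congrArg (‖·‖) hkey
      simp only [norm_mul, Complex.norm_real, Real.norm_eq_abs, Complex.norm_exp] at h
      rw [show ((θ' + g θ' : ℝ) * Complex.I).re = 0 by simp,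
        show ((α + (θ + g θ) : ℝ) * Complex.I).re = 0 by simp] at h
      simp only [Real.exp_zero, mul_one] at h
      rw [abs_of_pos (hwabs θ'), abs_of_pos hρ, abs_of_pos (hwabs θ)] at h
      exact h
    rw [habs2] at hkey
    have hne' : ((ρ * ‖wf z θ‖ : ℝ) : ℂ) ≠ 0 := by
      simp only [ne_eq, Complex.ofReal_eq_zero]
      exact ne_of_gt (mul_pos hρ (hwabs θ))
    exact mul_left_cancel₀ hne' hkey
  obtain ⟨n, hn⟩ := Complex.exp_eq_exp_iff_exists_int.1 hexp
  have hnre : θ' + g θ' = α + (θ + g θ) + n * (2 * Real.pi) := by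
    have h := congrArg Complex.im hn
    simpa using h
  have hn0 : n = 0 := by
    have hlt1 : (n : ℝ) < 1 := by
      nlinarith
    have hgt1 : (-1 : ℝ) < n := by
      nlinarith
    have : n < 1 := by exact_mod_cast hlt1
    have : (-1 : ℤ) < n := by exact_mod_cast hgt1
    omega
  rw [hn0] at hnre
  push_cast at hnre
  rw [hint]
  rw [div_sub_div_same]
  congr 1
  linarith
end

section
/- Let z be a point of the open unit disk and let θ, θ′ ∈ ℝ with 0 < θ′ − θ ≤ 2π. Let ψ, ψ′ ∈ ℝ be such that e^{iψ} = A_z(θ), e^{iψ′} = A_z(θ′), and 0 < ψ′ − ψ ≤ 2π. Then ∫_θ^{θ′} P(z,t) dt = (ψ′ − ψ)/(2π). -/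
/-- The antipode of `e^{iθ}` relative to a point `z` of the open unit disk:
`A_z(θ) = −(e^{iθ} − z)·e^{−iθ}/conj(e^{iθ} − z)`; it is the second intersection of the
line through `z` and `e^{iθ}` with the unit circle. -/
noncomputable def antipode (z : ℂ) (θ : ℝ) : ℂ :=
  -(Complex.exp (θ * Complex.I) - z) * Complex.exp (-θ * Complex.I) /
    (starRingEnd ℂ) (Complex.exp (θ * Complex.I) - z)

open Complex

noncomputable def pkU (z : ℂ) (t : ℝ) : ℂ := 1 - z * Complex.exp (-t * Complex.I)

noncomputable def pkG (z : ℂ) (t : ℝ) : ℝ := Real.pi + t + 2 * (Complex.log (pkU z t)).im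

lemma pkU_re_pos (z : ℂ) (hz : ‖z‖ < 1) (t : ℝ) : 0 < (pkU z t).re := by
  have habs : ‖z * Complex.exp (-t * Complex.I)‖ < 1 := by
    rw [norm_mul, Complex.norm_exp]
    simpa using hz
  have hre : (z * Complex.exp (-t * Complex.I)).re < 1 :=
    lt_of_le_of_lt (Complex.re_le_norm _) habs
  simp only [pkU, Complex.sub_re, Complex.one_re]
  linarith

lemma pkU_ne (z : ℂ) (hz : ‖z‖ < 1) (t : ℝ) : pkU z t ≠ 0 := by
  intro h
  have := pkU_re_pos z hz t
  rw [h] at this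
  simp at this

lemma pkU_hasDeriv (z : ℂ) (t : ℝ) :
    HasDerivAt (pkU z) (z * Complex.I * Complex.exp (-t * Complex.I)) t := by
  have h1 : HasDerivAt (fun s : ℝ => ((-s : ℝ) : ℂ)) (-1 : ℂ) t := by
    simpa using (hasDerivAt_id t).neg.ofReal_comp
  have h2 := ((h1.mul_const Complex.I).cexp.const_mul z).const_sub 1
  have h3 : HasDerivAt (fun s : ℝ => 1 - z * Complex.exp (-s * Complex.I))
      (-(z * (Complex.exp (-t * Complex.I) * (-1 * Complex.I)))) t := by
    convert h2 using 2 <;> push_cast <;> rfl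
  have h4 : HasDerivAt (pkU z)
      (-(z * (Complex.exp (-t * Complex.I) * (-1 * Complex.I)))) t := h3
  convert h4 using 1
  ring


lemma pk_aux (v : ℂ) (h : (1:ℂ) - v ≠ 0) :
    (1 - ‖v‖ ^ 2) / ‖1 - v‖ ^ 2 = 1 + 2 * ((v * I) / (1 - v)).im := by
  have hN : Complex.normSq (1 - v) ≠ 0 := by rwa [ne_eq, Complex.normSq_eq_zero]
  rw [Complex.div_im, Complex.sq_norm, Complex.sq_norm]
  simp only [Complex.mul_im, Complex.mul_re, Complex.I_re, Complex.I_im, Complex.sub_re,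
    Complex.sub_im, Complex.one_re, Complex.one_im, Complex.normSq_apply] at hN ⊢
  have hN' : (1 : ℝ) - v.re * 2 + v.re ^ 2 + v.im ^ 2 ≠ 0 := by
    intro h0; apply hN; nlinarith [h0]
  have hNi : (1 - v.re * 2 + v.re ^ 2 + v.im ^ 2) * (1 - v.re * 2 + v.re ^ 2 + v.im ^ 2)⁻¹ = 1 :=
    mul_inv_cancel₀ hN'
  field_simp
  linear_combination hNi

lemma poisson_pos (z : ℂ) (hz : ‖z‖ < 1) (t : ℝ) : 0 < poisson z t := by
  have h1 : (0:ℝ) < 1 - ‖z‖ ^ 2 := by nlinarith [norm_nonneg z]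
  have h2 : z ≠ Complex.exp (t * Complex.I) := by
    intro h
    rw [h, Complex.norm_exp] at hz
    simp at hz
  have h3 : (0:ℝ) < ‖z - Complex.exp (t * Complex.I)‖ := by
    rw [norm_pos_iff]
    exact sub_ne_zero.mpr h2
  unfold poisson
  have := Real.pi_pos
  positivity

lemma poisson_cont (z : ℂ) (hz : ‖z‖ < 1) : Continuous (poisson z) := by
  have h2 : ∀ t : ℝ, z ≠ Complex.exp (t * Complex.I) := by
    intro t h
    rw [h, Complex.norm_exp] at hz
    simp at hz
  unfold poisson
  apply Continuous.div continuous_const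
  · exact (continuous_norm.comp
      (continuous_const.sub ((Complex.continuous_ofReal.mul continuous_const).cexp))).pow 2
  · intro t
    have : ‖z - Complex.exp (t * Complex.I)‖ ≠ 0 := by
      rw [ne_eq, norm_eq_zero, sub_eq_zero]
      exact h2 t
    exact pow_ne_zero 2 this

lemma pkG_hasDeriv (z : ℂ) (hz : ‖z‖ < 1) (t : ℝ) :
    HasDerivAt (pkG z) (2 * Real.pi * poisson z t) t := by
  have hu := pkU_hasDeriv z t
  have hslit : pkU z t ∈ Complex.slitPlane := Or.inl (pkU_re_pos z hz t)
  have hlog := hu.clog_real hslit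
  have him : HasDerivAt (fun s => (Complex.log (pkU z s)).im)
      ((z * Complex.I * Complex.exp (-t * Complex.I) / pkU z t).im) t :=
    Complex.imCLM.hasFDerivAt.comp_hasDerivAt t hlog
  have hg : HasDerivAt (pkG z)
      (1 + 2 * (z * Complex.I * Complex.exp (-t * Complex.I) / pkU z t).im) t := by
    unfold pkG
    exact ((hasDerivAt_id t).const_add Real.pi).add (him.const_mul 2)
  convert hg using 1
  -- arithmetic identity
  set v : ℂ := z * Complex.exp (-t * Complex.I) with hv
  have hvabs : ‖v‖ = ‖z‖ := by
    rw [hv, norm_mul, Complex.norm_exp]; simp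
  have huv : pkU z t = 1 - v := rfl
  have hexpne : Complex.exp ((t:ℂ) * Complex.I) ≠ 0 := Complex.exp_ne_zero _
  have hinv : Complex.exp (-(t:ℂ) * Complex.I) = (Complex.exp ((t:ℂ) * Complex.I))⁻¹ := by
    rw [neg_mul, Complex.exp_neg]
  have hsub : z - Complex.exp (t * Complex.I) = -Complex.exp (t * Complex.I) * (1 - v) := by
    rw [hv, hinv]
    field_simp
    ring
  have habs2 : ‖z - Complex.exp (t * Complex.I)‖ = ‖1 - v‖ := by
    rw [hsub, norm_mul, norm_neg, Complex.norm_exp]; simp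
  have hN : Complex.normSq (1 - v) ≠ 0 := by
    rw [← huv, ← Complex.sq_norm]
    have := (norm_pos_iff.mpr (pkU_ne z hz t))
    positivity
  have h1v : (1:ℂ) - v ≠ 0 := by rw [← huv]; exact pkU_ne z hz t
  have h5 : 2 * Real.pi * poisson z t
      = (1 - ‖v‖ ^ 2) / ‖1 - v‖ ^ 2 := by
    unfold poisson
    rw [habs2, ← hvabs]
    have hc : 2 * Real.pi * (1 / (2 * Real.pi)) = 1 := by
      field_simp
    rw [← mul_div_assoc, ← mul_assoc, hc, one_mul]
  rw [h5, pk_aux v h1v]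
  rw [show z * Complex.I * Complex.exp (-t * Complex.I) = v * Complex.I by rw [hv]; ring, huv]

lemma pkG_exp (z : ℂ) (hz : ‖z‖ < 1) (t : ℝ) :
    Complex.exp ((pkG z t : ℝ) * Complex.I) = antipode z t := by
  have hune : pkU z t ≠ 0 := pkU_ne z hz t
  set u : ℂ := pkU z t with hu
  have habs : ((‖u‖ : ℝ) : ℂ) ≠ 0 := by
    simpa using (norm_pos_iff.mpr hune).ne'
  have hgu : (pkG z t : ℂ) = Real.pi + t + 2 * Complex.arg u := by
    unfold pkG
    push_cast [Complex.log_im]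
    ring
  have hxp : Complex.exp ((pkG z t : ℝ) * Complex.I)
      = Complex.exp (Real.pi * Complex.I) * Complex.exp (t * Complex.I) *
        Complex.exp ((Complex.arg u : ℝ) * Complex.I) ^ 2 := by
    rw [sq, ← Complex.exp_add, ← Complex.exp_add, ← Complex.exp_add]
    congr 1
    rw [show ((pkG z t : ℝ) : ℂ) * Complex.I = (pkG z t : ℂ) * Complex.I from rfl, hgu]
    ring
  have harg : Complex.exp ((Complex.arg u : ℝ) * Complex.I) = u / ((‖u‖ : ℝ) : ℂ) := by
    rw [eq_div_iff habs, mul_comm]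
    exact Complex.norm_mul_exp_arg_mul_I u
  have hexpne : Complex.exp ((t:ℂ) * Complex.I) ≠ 0 := Complex.exp_ne_zero _
  have hinv : Complex.exp (-(t:ℂ) * Complex.I) = (Complex.exp ((t:ℂ) * Complex.I))⁻¹ := by
    rw [neg_mul, Complex.exp_neg]
  have hsubu : Complex.exp (t * Complex.I) - z = Complex.exp (t * Complex.I) * u := by
    rw [hu]
    unfold pkU
    rw [hinv]
    field_simp
  have hconj : (starRingEnd ℂ) (Complex.exp (t * Complex.I) - z)
      = Complex.exp (-t * Complex.I) * (starRingEnd ℂ) u := by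
    rw [hsubu, map_mul, ← Complex.exp_conj]
    congr 1
    simp [Complex.conj_I]
  have hconju : (starRingEnd ℂ) u ≠ 0 := by simpa using hune
  have hmulconj : u * (starRingEnd ℂ) u = ((‖u‖ : ℝ) : ℂ) ^ 2 := by
    rw [Complex.mul_conj]
    norm_cast
    rw [← Complex.sq_norm]
  rw [hxp, harg, Complex.exp_pi_mul_I]
  unfold antipode
  rw [hconj, hsubu, div_pow, ← hmulconj, hinv]
  field_simp

/-- **Harmonic measure via antipodes.**  Let `z` be in the open unit disk and
`θ, θ′ ∈ ℝ` with `0 < θ′ − θ ≤ 2π`.  If `ψ, ψ′ ∈ ℝ` satisfy `e^{iψ} = A_z(θ)`,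
`e^{iψ′} = A_z(θ′)` and `0 < ψ′ − ψ ≤ 2π`, then
`∫_θ^{θ′} P(z,t) dt = (ψ′ − ψ)/(2π)`. -/
theorem harmonic_measure_antipode
    (z : ℂ) (hz : ‖z‖ < 1) (θ θ' : ℝ)
    (hθ : 0 < θ' - θ) (hθ2 : θ' - θ ≤ 2 * Real.pi)
    (ψ ψ' : ℝ)
    (hψ : Complex.exp (ψ * Complex.I) = antipode z θ)
    (hψ' : Complex.exp (ψ' * Complex.I) = antipode z θ')
    (hψord : 0 < ψ' - ψ) (hψord2 : ψ' - ψ ≤ 2 * Real.pi) :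
    ∫ t in θ..θ', poisson z t = (ψ' - ψ) / (2 * Real.pi) := by
  have hpi : (0:ℝ) < 2 * Real.pi := by positivity
  have hcont := poisson_cont z hz
  have ftc : ∀ a b : ℝ, ∫ t in a..b, poisson z t = (pkG z b - pkG z a) / (2 * Real.pi) := by
    intro a b
    have h := intervalIntegral.integral_eq_sub_of_hasDerivAt
      (f := pkG z) (f' := fun t => 2 * Real.pi * poisson z t)
      (fun x _ => pkG_hasDeriv z hz x)
      ((continuous_const.mul hcont).intervalIntegrable a b)
    rw [intervalIntegral.integral_const_mul] at h
    rw [eq_div_iff hpi.ne']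
    linarith [h]
  have hper : pkG z (θ + 2 * Real.pi) = pkG z θ + 2 * Real.pi := by
    have huper : pkU z (θ + 2 * Real.pi) = pkU z θ := by
      unfold pkU
      congr 2
      rw [show -((θ + 2 * Real.pi : ℝ) : ℂ) * Complex.I
          = -(θ : ℂ) * Complex.I + (-(2 * Real.pi * Complex.I)) by push_cast; ring]
      rw [Complex.exp_add, Complex.exp_neg, Complex.exp_two_pi_mul_I]
      simp
    unfold pkG
    rw [huper]
    ring
  have hgpos : 0 < pkG z θ' - pkG z θ := by
    have hint : 0 < ∫ t in θ..θ', poisson z t :=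
      intervalIntegral.intervalIntegral_pos_of_pos (hcont.intervalIntegrable θ θ')
        (poisson_pos z hz) (by linarith)
    rw [ftc θ θ'] at hint
    have h2 := mul_pos hint hpi
    rwa [div_mul_cancel₀ _ hpi.ne'] at h2
  have hgle : pkG z θ' - pkG z θ ≤ 2 * Real.pi := by
    have hint : 0 ≤ ∫ t in θ'..(θ + 2 * Real.pi), poisson z t := by
      apply intervalIntegral.integral_nonneg (by linarith)
      intro u _
      exact (poisson_pos z hz u).le
    rw [ftc, hper] at hint
    have h2 := mul_nonneg hint hpi.le
    rw [div_mul_cancel₀ _ hpi.ne'] at h2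
    linarith
  obtain ⟨n, hn⟩ := Complex.exp_eq_exp_iff_exists_int.mp (hψ.trans (pkG_exp z hz θ).symm)
  obtain ⟨m, hm⟩ := Complex.exp_eq_exp_iff_exists_int.mp (hψ'.trans (pkG_exp z hz θ').symm)
  have hnr : ψ = pkG z θ + n * (2 * Real.pi) := by
    have := congrArg Complex.im hn
    simpa [Complex.mul_im, Complex.add_im] using this
  have hmr : ψ' = pkG z θ' + m * (2 * Real.pi) := by
    have := congrArg Complex.im hm
    simpa [Complex.mul_im, Complex.add_im] using this
  have hmn : m = n := by
    by_contra h
    rcases lt_or_gt_of_ne h with hlt | hgt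
    · have h1 : ((m:ℝ)) - n ≤ -1 := by
        have : m - n ≤ -1 := by omega
        exact_mod_cast this
      nlinarith [Real.pi_pos]
    · have h1 : (1:ℝ) ≤ (m:ℝ) - n := by
        have : 1 ≤ m - n := by omega
        exact_mod_cast this
      nlinarith [Real.pi_pos]
  rw [ftc θ θ', hnr, hmr, hmn]
  ring
end
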